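/- Fix points x_1,…,x_M ∈ ℝ^d, weights μ ∈ ℝ^M with positive entries and Σ_i μ_i = 1, and ν ∈ ℝ^M with nonnegative entries and Σ_j ν_j = 1. Let c : ℝ^d × ℝ^d → ℝ be convex in its second argument, and let V(μ, ν) be the barycentric weak OT value. Let U ⊆ ℝ^d be an open set containing the convex hull of {x_1,…,x_M}. For each n ∈ ℕ let Y_n = {y_1^n,…,y_{N(n)}^n} ⊂ ℝ^d be a finite set with U contained in the convex hull of Y_n, and assume sup_{a∈U} min_{y∈Y_n} ‖a − y‖ → 0 as n → ∞. For each n let (π̂^{x,n}, π̂^{y,n}) be an optimal solution of the relaxed problem with respect to Y_n, and set m̂_i^n := (1/μ_i)·Σ_{j=1}^M π̂^{x,n}_{ij}·x_j. Then lim_{n→∞} Σ_{i=1}^M μ_i·c(x_i, m̂_i^n) = lim_{n→∞} Σ_{i,k} π̂^{y,n}_{ik}·c(x_i, y_k^n) = V(μ, ν). -/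

import Mathlib

open Filter Topology

/-- The set of couplings of `μ` and `ν`. -/
def PiSet {M : ℕ} (μ ν : Fin M → ℝ) : Set (Fin M → Fin M → ℝ) :=
  {π | (∀ i j, 0 ≤ π i j) ∧ (∀ i, ∑ j, π i j = μ i) ∧ (∀ j, ∑ i, π i j = ν j)}

open Finset RealInnerProductSpace in
lemma memHullNear {d n : ℕ} (y : Fin n → EuclideanSpace ℝ (Fin d))
    (a : EuclideanSpace ℝ (Fin d)) (U : Set (EuclideanSpace ℝ (Fin d)))
    (ha : a ∈ U) (ε : ℝ) (hε : 0 < ε) (hball : Metric.ball a (5*ε) ⊆ U)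
    (hnet : ∀ b ∈ U, ∃ k, ‖b - y k‖ ≤ ε) :
    ∃ lam : Fin n → ℝ, (∀ k, 0 ≤ lam k) ∧ (∑ k, lam k = 1) ∧
      (∑ k, lam k • y k = a) ∧ (∀ k, lam k ≠ 0 → ‖y k - a‖ ≤ 5*ε) := by
  classical
  set K : Finset (Fin n) := Finset.univ.filter (fun k => ‖y k - a‖ ≤ 5*ε) with hK
  set s : Finset (EuclideanSpace ℝ (Fin d)) := K.image y with hs
  obtain ⟨k₀, hk₀⟩ := hnet a ha
  have hk₀K : k₀ ∈ K := by
    simp only [hK, Finset.mem_filter, Finset.mem_univ, true_and]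
    rw [norm_sub_rev]; linarith
  have hmem : a ∈ convexHull ℝ (s : Set _) := by
    by_contra hcon
    obtain ⟨f, u, hfu, hua⟩ := geometric_hahn_banach_closed_point
      (convex_convexHull ℝ _) (s.finite_toSet.isClosed_convexHull (𝕜 := ℝ)) hcon
    set v : EuclideanSpace ℝ (Fin d) := (InnerProductSpace.toDual ℝ _).symm f with hv
    have hfv : ∀ z, ⟪v, z⟫ = f z := fun z => InnerProductSpace.toDual_symm_apply
    have hvne : ‖v‖ ≠ 0 := by
      intro h0
      have hv0 : v = 0 := norm_eq_zero.mp h0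
      have h1 : f (y k₀) < u := hfu _ (subset_convexHull ℝ _ (by
        rw [hs]; exact Finset.mem_coe.mpr (Finset.mem_image_of_mem y hk₀K)))
      have h2 : f (y k₀) = 0 := by rw [← hfv]; simp [hv0]
      have h3 : f a = 0 := by rw [← hfv]; simp [hv0]
      linarith
    have hvpos : 0 < ‖v‖ := lt_of_le_of_ne (norm_nonneg v) (Ne.symm hvne)
    set b := a + (4*ε/‖v‖) • v with hb
    have hbU : b ∈ U := by
      apply hball
      simp only [Metric.mem_ball, dist_eq_norm, hb, add_sub_cancel_left, norm_smul]
      rw [Real.norm_eq_abs, abs_of_pos (by positivity)]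
      rw [div_mul_cancel₀ _ hvne]
      linarith
    obtain ⟨k, hk⟩ := hnet b hbU
    have hkK : k ∈ K := by
      simp only [hK, Finset.mem_filter, Finset.mem_univ, true_and]
      have : ‖y k - a‖ ≤ ‖y k - b‖ + ‖b - a‖ := by
        have := norm_add_le (y k - b) (b - a); simpa using this
      have h1 : ‖y k - b‖ ≤ ε := by rw [norm_sub_rev]; exact hk
      have h2 : ‖b - a‖ = 4*ε := by
        simp only [hb, add_sub_cancel_left, norm_smul, Real.norm_eq_abs,
          abs_of_pos (show (0:ℝ) < 4*ε/‖v‖ by positivity)]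
        rw [div_mul_cancel₀ _ hvne]
      linarith
    have hfk : f (y k) < u := hfu _ (subset_convexHull ℝ _ (by
      rw [hs]; exact Finset.mem_coe.mpr (Finset.mem_image_of_mem y hkK)))
    have h1 : ⟪v, y k - b⟫ ≥ -(‖v‖ * ε) := by
      have habs := abs_real_inner_le_norm v (y k - b)
      have h2 : ‖y k - b‖ ≤ ε := by rw [norm_sub_rev]; exact hk
      have := neg_abs_le (⟪v, y k - b⟫)
      nlinarith [norm_nonneg v]
    have h2 : ⟪v, b⟫ = ⟪v, a⟫ + 4*ε*‖v‖ := by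
      rw [hb, inner_add_right, real_inner_smul_right, real_inner_self_eq_norm_sq]
      field_simp
    have h3 : ⟪v, y k⟫ = ⟪v, b⟫ + ⟪v, y k - b⟫ := by
      rw [← inner_add_right]; congr 1; abel
    have h4 : f (y k) ≥ f a + 3*ε*‖v‖ := by
      rw [← hfv, ← hfv, h3, h2]; nlinarith
    nlinarith
  rw [Finset.convexHull_eq] at hmem
  obtain ⟨w, hw0, hw1, hwc⟩ := hmem
  rw [Finset.centerMass_eq_of_sum_1 _ _ hw1] at hwc
  set g : EuclideanSpace ℝ (Fin d) → Fin n := fun p =>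
    if h : ∃ k, k ∈ K ∧ y k = p then h.choose else k₀ with hg
  have hgs : ∀ p ∈ s, g p ∈ K ∧ y (g p) = p := by
    intro p hp
    rw [hs, Finset.mem_image] at hp
    obtain ⟨k, hk, hyk⟩ := hp
    have h : ∃ k, k ∈ K ∧ y k = p := ⟨k, hk, hyk⟩
    simp only [hg, dif_pos h]
    exact ⟨h.choose_spec.1, h.choose_spec.2⟩
  refine ⟨fun k => ∑ p ∈ s, if g p = k then w p else 0, ?_, ?_, ?_, ?_⟩
  · intro k
    refine Finset.sum_nonneg fun p hp => ?_
    split_ifs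
    · exact hw0 p hp
    · exact le_refl 0
  · rw [Finset.sum_comm]
    rw [← hw1]
    refine Finset.sum_congr rfl fun p _ => ?_
    simp [Finset.sum_ite_eq]
  · rw [← hwc]
    simp_rw [Finset.sum_smul]
    rw [Finset.sum_comm]
    refine Finset.sum_congr rfl fun p hp => ?_
    simp_rw [ite_smul, zero_smul]
    rw [Finset.sum_ite_eq]
    simp [(hgs p hp).2]
  · intro k hk
    obtain ⟨p, hp, hpne⟩ := Finset.exists_ne_zero_of_sum_ne_zero hk
    have hgpk : g p = k := by by_contra h; simp [h] at hpne
    have := (hgs p hp).2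
    rw [hgpk] at this
    rw [this]
    have hp' := hp
    rw [hs, Finset.mem_image] at hp'
    obtain ⟨k', hk', hyk'⟩ := hp'
    rw [hK, Finset.mem_filter] at hk'
    rw [← hyk']; exact hk'.2

/-- Convergence of the relaxed barycentric weak OT values to the weak OT
value `V(μ, ν)` as the auxiliary grids `Yₙ` become dense. -/
theorem stmt13 {d M : ℕ}
    (x : Fin M → EuclideanSpace ℝ (Fin d))
    (μ ν : Fin M → ℝ) (hμ : ∀ i, 0 < μ i) (hμs : ∑ i, μ i = 1)
    (hν : ∀ j, 0 ≤ ν j) (hνs : ∑ j, ν j = 1)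
    (c : EuclideanSpace ℝ (Fin d) → EuclideanSpace ℝ (Fin d) → ℝ)
    (hc : ∀ a, ConvexOn ℝ Set.univ (c a))
    (V : ℝ)
    (hV : V = sInf ((fun π : Fin M → Fin M → ℝ =>
      ∑ i, μ i * c (x i) ((μ i)⁻¹ • ∑ j, π i j • x j)) '' PiSet μ ν))
    (U : Set (EuclideanSpace ℝ (Fin d))) (hUopen : IsOpen U)
    (hXU : convexHull ℝ (Set.range x) ⊆ U)
    (N : ℕ → ℕ) (y : (n : ℕ) → Fin (N n) → EuclideanSpace ℝ (Fin d))
    (hUY : ∀ n, U ⊆ convexHull ℝ (Set.range (y n)))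
    (hdist : ∀ ε > (0 : ℝ), ∃ n₀ : ℕ, ∀ n ≥ n₀, ∀ a ∈ U, ∃ k, ‖a - y n k‖ ≤ ε)
    (πx : (n : ℕ) → Fin M → Fin M → ℝ)
    (πy : (n : ℕ) → Fin M → Fin (N n) → ℝ)
    -- (π̂ˣⁿ, π̂ʸⁿ) is feasible for the relaxed problem w.r.t. `Yₙ` …
    (hfeas : ∀ n, πx n ∈ PiSet μ ν ∧ (∀ i k, 0 ≤ πy n i k) ∧
      (∀ i, ∑ k, πy n i k = μ i) ∧
      (∀ i, ∑ j, πx n i j • x j = ∑ k, πy n i k • y n k))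
    -- … and optimal:
    (hopt : ∀ n, ∀ (σx : Fin M → Fin M → ℝ) (σy : Fin M → Fin (N n) → ℝ),
      σx ∈ PiSet μ ν → (∀ i k, 0 ≤ σy i k) → (∀ i, ∑ k, σy i k = μ i) →
      (∀ i, ∑ j, σx i j • x j = ∑ k, σy i k • y n k) →
      ∑ i, ∑ k, πy n i k * c (x i) (y n k) ≤
        ∑ i, ∑ k, σy i k * c (x i) (y n k)) :
    Tendsto (fun n => ∑ i, μ i * c (x i) ((μ i)⁻¹ • ∑ j, πx n i j • x j))
      atTop (𝓝 V) ∧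
    Tendsto (fun n => ∑ i, ∑ k, πy n i k * c (x i) (y n k)) atTop (𝓝 V) := by
  classical
  have hM : M ≠ 0 := by rintro rfl; simp at hμs
  haveI : Nonempty (Fin M) := ⟨⟨0, Nat.pos_of_ne_zero hM⟩⟩
  set F : (Fin M → Fin M → ℝ) → ℝ := fun π =>
    ∑ i, μ i * c (x i) ((μ i)⁻¹ • ∑ j, π i j • x j) with hF
  -- continuity of c a
  have hcc : ∀ a, Continuous (c a) := by
    intro a
    have := (hc a).continuousOn isOpen_univ
    rwa [continuousOn_univ] at this
  have happ : ∀ i j : Fin M, Continuous fun π : Fin M → Fin M → ℝ => π i j :=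
    fun i j => (continuous_apply j).comp (continuous_apply i)
  have hFcont : Continuous F := by
    refine continuous_finset_sum _ fun i _ => Continuous.mul continuous_const ?_
    exact (hcc (x i)).comp (by fun_prop)
  -- compactness of PiSet
  have hclosed : IsClosed (PiSet μ ν) := by
    have heq : PiSet μ ν = (⋂ i, ⋂ j, {π : Fin M → Fin M → ℝ | 0 ≤ π i j}) ∩
        ((⋂ i, {π : Fin M → Fin M → ℝ | ∑ j, π i j = μ i}) ∩
          (⋂ j, {π : Fin M → Fin M → ℝ | ∑ i, π i j = ν j})) := by
      ext π
      simp only [PiSet, Set.mem_setOf_eq, Set.mem_inter_iff, Set.mem_iInter]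
    rw [heq]
    refine IsClosed.inter
      (isClosed_iInter fun i => isClosed_iInter fun j =>
        isClosed_le continuous_const (happ i j))
      (IsClosed.inter
        (isClosed_iInter fun i =>
          isClosed_eq (continuous_finset_sum _ fun j _ => happ i j) continuous_const)
        (isClosed_iInter fun j =>
          isClosed_eq (continuous_finset_sum _ fun i _ => happ i j) continuous_const))
  have hsub : PiSet μ ν ⊆ Set.univ.pi fun _ : Fin M =>
      Set.univ.pi fun _ : Fin M => Set.Icc (0:ℝ) 1 := by
    rintro π ⟨h0, h1, _⟩
    intro i _
    intro j _
    refine ⟨h0 i j, ?_⟩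
    have h2 : π i j ≤ ∑ j', π i j' :=
      Finset.single_le_sum (fun j' _ => h0 i j') (Finset.mem_univ j)
    have h3 : μ i ≤ 1 := by
      rw [← hμs]
      exact Finset.single_le_sum (fun i' _ => (hμ i').le) (Finset.mem_univ i)
    rw [h1 i] at h2
    linarith
  have hcomp : IsCompact (PiSet μ ν) :=
    IsCompact.of_isClosed_subset
      (isCompact_univ_pi fun _ => isCompact_univ_pi fun _ => isCompact_Icc) hclosed hsub
  have hne : (PiSet μ ν).Nonempty := ⟨πx 0, (hfeas 0).1⟩
  obtain ⟨πs, hπsmem, hπsmin'⟩ := hcomp.exists_isMinOn hne hFcont.continuousOn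
  have hπsmin : ∀ π ∈ PiSet μ ν, F πs ≤ F π := fun π hπ => hπsmin' hπ
  obtain ⟨hs0, hs1, hs2⟩ := hπsmem
  have hVeq : V = F πs := by
    rw [hV]
    apply le_antisymm
    · refine csInf_le ⟨F πs, ?_⟩ ⟨πs, ⟨hs0, hs1, hs2⟩, rfl⟩
      rintro b ⟨π, hπ, rfl⟩
      exact hπsmin π hπ
    · refine le_csInf (hne.image _) ?_
      rintro b ⟨π, hπ, rfl⟩
      exact hπsmin π hπ
  -- Jensen lower bound : V ≤ F (πx n) ≤ G n
  set G : ℕ → ℝ := fun n => ∑ i, ∑ k, πy n i k * c (x i) (y n k) with hG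
  have hVF : ∀ n, V ≤ F (πx n) := fun n => hVeq ▸ hπsmin _ (hfeas n).1
  have hFG : ∀ n, F (πx n) ≤ G n := by
    intro n
    refine Finset.sum_le_sum fun i _ => ?_
    rw [(hfeas n).2.2.2 i]
    have hJ := (hc (x i)).map_centerMass_le (t := Finset.univ) (w := πy n i) (p := y n)
      (fun k _ => (hfeas n).2.1 i k)
      (by rw [(hfeas n).2.2.1 i]; exact hμ i) (fun k _ => Set.mem_univ _)
    simp only [Finset.centerMass, (hfeas n).2.2.1 i, Function.comp] at hJ
    have h2 : μ i * c (x i) ((μ i)⁻¹ • ∑ k, πy n i k • y n k) ≤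
        μ i * ((μ i)⁻¹ • ∑ k, πy n i k • c (x i) (y n k)) :=
      mul_le_mul_of_nonneg_left hJ (hμ i).le
    refine h2.trans (le_of_eq ?_)
    rw [smul_eq_mul, ← mul_assoc, mul_inv_cancel₀ (hμ i).ne', one_mul]
    simp [smul_eq_mul]
  -- upper bound
  set m : Fin M → EuclideanSpace ℝ (Fin d) := fun i => (μ i)⁻¹ • ∑ j, πs i j • x j with hm
  have hmU : ∀ i, m i ∈ U := by
    intro i
    apply hXU
    have heq : m i = Finset.univ.centerMass (πs i) x := by
      simp [hm, Finset.centerMass, hs1 i]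
    rw [heq]
    exact Finset.centerMass_mem_convexHull _ (fun j _ => hs0 i j)
      (by rw [hs1 i]; exact hμ i) (fun j _ => Set.mem_range_self j)
  have hup : ∀ ε > (0:ℝ), ∃ n₀, ∀ n ≥ n₀, G n ≤ V + ε := by
    intro ε hε
    have hr : ∀ i, ∃ r > (0:ℝ), Metric.ball (m i) r ⊆ U :=
      fun i => Metric.isOpen_iff.mp hUopen _ (hmU i)
    choose r hr0 hrU using hr
    have hδ : ∀ i, ∃ δ > (0:ℝ), ∀ z, ‖z - m i‖ ≤ δ → c (x i) z ≤ c (x i) (m i) + ε := by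
      intro i
      have hct : ContinuousAt (c (x i)) (m i) := (hcc (x i)).continuousAt
      rw [Metric.continuousAt_iff] at hct
      obtain ⟨δ, hδ0, hδ1⟩ := hct ε hε
      refine ⟨δ/2, by linarith, fun z hz => ?_⟩
      have h1 := hδ1 (show dist z (m i) < δ by rw [dist_eq_norm]; linarith)
      rw [Real.dist_eq] at h1
      have := (abs_lt.mp h1).2
      linarith
    choose δ hδ0 hδc using hδ
    set η : ℝ := (Finset.univ.inf' Finset.univ_nonempty fun i => min (r i) (δ i)) / 5 with hη
    have hη0 : 0 < η := by
      rw [hη]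
      have : ∀ i ∈ Finset.univ, (0:ℝ) < min (r i) (δ i) :=
        fun i _ => lt_min (hr0 i) (hδ0 i)
      have h := (Finset.lt_inf'_iff Finset.univ_nonempty).mpr this
      linarith
    have hη5 : ∀ i, 5 * η ≤ min (r i) (δ i) := by
      intro i
      have := Finset.inf'_le (fun i => min (r i) (δ i)) (Finset.mem_univ i)
      rw [hη]; linarith
    obtain ⟨n₀, hn₀⟩ := hdist η hη0
    refine ⟨n₀, fun n hn => ?_⟩
    have hnet : ∀ b ∈ U, ∃ k, ‖b - y n k‖ ≤ η := hn₀ n hn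
    have hlam : ∀ i, ∃ lam : Fin (N n) → ℝ, (∀ k, 0 ≤ lam k) ∧ (∑ k, lam k = 1) ∧
        (∑ k, lam k • y n k = m i) ∧ (∀ k, lam k ≠ 0 → ‖y n k - m i‖ ≤ 5*η) := by
      intro i
      refine memHullNear (y n) (m i) U (hmU i) η hη0 ?_ hnet
      refine (Metric.ball_subset_ball ?_).trans (hrU i)
      exact (hη5 i).trans (min_le_left _ _)
    choose lam hlam0 hlam1 hlamy hlamsupp using hlam
    have hkey := hopt n πs (fun i k => μ i * lam i k) ⟨hs0, hs1, hs2⟩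
      (fun i k => mul_nonneg (hμ i).le (hlam0 i k))
      (fun i => by rw [← Finset.mul_sum, hlam1 i, mul_one])
      (by
        intro i
        have h1 : ∑ k, (μ i * lam i k) • y n k = μ i • ∑ k, lam i k • y n k := by
          rw [Finset.smul_sum]
          exact Finset.sum_congr rfl fun k _ => by rw [mul_smul]
        rw [h1, hlamy i, hm]
        rw [smul_smul, mul_inv_cancel₀ (hμ i).ne', one_smul])
    refine hkey.trans ?_
    have hinner : ∀ i, ∑ k, lam i k * c (x i) (y n k) ≤ c (x i) (m i) + ε := by
      intro i
      calc ∑ k, lam i k * c (x i) (y n k)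
          ≤ ∑ k, lam i k * (c (x i) (m i) + ε) := by
            refine Finset.sum_le_sum fun k _ => ?_
            by_cases h : lam i k = 0
            · simp [h]
            · refine mul_le_mul_of_nonneg_left ?_ (hlam0 i k)
              exact hδc i (y n k)
                ((hlamsupp i k h).trans ((hη5 i).trans (min_le_right _ _)))
        _ = c (x i) (m i) + ε := by rw [← Finset.sum_mul, hlam1 i, one_mul]
    calc ∑ i, ∑ k, (μ i * lam i k) * c (x i) (y n k)
        = ∑ i, μ i * ∑ k, lam i k * c (x i) (y n k) := by
          refine Finset.sum_congr rfl fun i _ => ?_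
          rw [Finset.mul_sum]
          exact Finset.sum_congr rfl fun k _ => by ring
      _ ≤ ∑ i, μ i * (c (x i) (m i) + ε) :=
          Finset.sum_le_sum fun i _ => mul_le_mul_of_nonneg_left (hinner i) (hμ i).le
      _ = F πs + ε := by
          simp_rw [mul_add]
          rw [Finset.sum_add_distrib, ← Finset.sum_mul, hμs, one_mul]
      _ = V + ε := by rw [hVeq]
  -- squeeze
  have ht : ∀ h : ℕ → ℝ, (∀ n, V ≤ h n) → (∀ n, h n ≤ G n) → Tendsto h atTop (𝓝 V) := by
    intro h h1 h2
    rw [Metric.tendsto_atTop]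
    intro ε hε
    obtain ⟨n₀, hn₀⟩ := hup (ε/2) (by linarith)
    refine ⟨n₀, fun n hn => ?_⟩
    have := hn₀ n hn
    have := h1 n
    have := h2 n
    rw [Real.dist_eq, abs_lt]
    constructor <;> linarith
  exact ⟨ht (fun n => F (πx n)) hVF hFG,
    ht G (fun n => (hVF n).trans (hFG n)) fun n => le_rfl⟩
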